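/- Short-maturity expansion of the Black-Scholes put price: fix S₀ > 0, σ > 0 and z ∈ ℝ, and set Δ(θ) = (e^{z√θ} − 1)/√θ. Then, as θ → 0⁺, p_BS(S₀, S₀·e^{z√θ}, θ, σ)/(S₀·√θ) − [ Δ(θ)·Φ(Δ(θ)/σ) + σ·φ(Δ(θ)/σ)·(1 + (z/2)·√θ) ] = o(√θ). -/

import Mathlib

open MeasureTheory Real Filter

/-- The standard normal density. -/
noncomputable def stdNormalPDF (x : ℝ) : ℝ :=
  (Real.sqrt (2 * Real.pi))⁻¹ * Real.exp (-(x ^ 2) / 2)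

/-- The standard normal cumulative distribution function. -/
noncomputable def stdNormalCDF (x : ℝ) : ℝ :=
  ∫ t in Set.Iic x, stdNormalPDF t

/-- `d₁ = log(S/K)/(σ√θ) + σ√θ/2`. -/
noncomputable def d1 (S K θ σ : ℝ) : ℝ :=
  Real.log (S / K) / (σ * Real.sqrt θ) + σ * Real.sqrt θ / 2

/-- `d₂ = d₁ − σ√θ`. -/
noncomputable def d2 (S K θ σ : ℝ) : ℝ :=
  d1 S K θ σ - σ * Real.sqrt θ

/-- Black-Scholes call price `c_BS(S,K,θ,σ) = S·Φ(d₁) − K·Φ(d₂)`. -/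
noncomputable def cBS (S K θ σ : ℝ) : ℝ :=
  S * stdNormalCDF (d1 S K θ σ) - K * stdNormalCDF (d2 S K θ σ)

/-- Black-Scholes put price `p_BS(S,K,θ,σ) = K·Φ(−d₂) − S·Φ(−d₁)`. -/
noncomputable def pBS (S K θ σ : ℝ) : ℝ :=
  K * stdNormalCDF (-(d2 S K θ σ)) - S * stdNormalCDF (-(d1 S K θ σ))

lemma pdf_cont : Continuous stdNormalPDF := by
  unfold stdNormalPDF; fun_prop

lemma pdf_integrable : Integrable stdNormalPDF := by
  have h : Integrable (fun x : ℝ => Real.exp (-(1/2 : ℝ) * x ^ 2)) :=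
    integrable_exp_neg_mul_sq (by norm_num)
  have := h.const_mul (Real.sqrt (2 * Real.pi))⁻¹
  refine this.congr (Eventually.of_forall fun x => ?_)
  unfold stdNormalPDF; ring_nf

lemma hasDerivAt_cdf (x : ℝ) : HasDerivAt stdNormalCDF (stdNormalPDF x) x := by
  have key : ∀ y : ℝ, stdNormalCDF y = stdNormalCDF 0 + ∫ t in (0:ℝ)..y, stdNormalPDF t := by
    intro y
    rw [← intervalIntegral.integral_Iic_sub_Iic pdf_integrable.integrableOn
      pdf_integrable.integrableOn]
    unfold stdNormalCDF; ring
  have h := (pdf_cont.integral_hasStrictDerivAt 0 x).hasDerivAt.const_add (stdNormalCDF 0)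
  exact h.congr_deriv rfl |>.congr_of_eventuallyEq (Eventually.of_forall fun y => (key y)) 

lemma hasDerivAt_pdf (x : ℝ) : HasDerivAt stdNormalPDF (-x * stdNormalPDF x) x := by
  have h1 : HasDerivAt (fun y : ℝ => -(y ^ 2) / 2) (-x) x := by
    have := ((hasDerivAt_pow 2 x).neg).div_const 2
    simpa using this.congr_deriv (by ring)
  have h2 := (h1.exp).const_mul (Real.sqrt (2 * Real.pi))⁻¹
  refine h2.congr_deriv ?_
  unfold stdNormalPDF; ring

/-- Second-order Taylor expansion with little-o remainder. -/
lemma second_order {f f' : ℝ → ℝ} {a f'' : ℝ}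
    (hf : ∀ x, HasDerivAt f (f' x) x) (hf' : HasDerivAt f' f'' a) :
    (fun t => f (a + t) - f a - f' a * t - f'' * t ^ 2 / 2) =o[nhds 0] fun t => t ^ 2 := by
  set g : ℝ → ℝ := fun t => f (a + t) - f a - f' a * t - f'' * t ^ 2 / 2 with hg
  have hg0 : g 0 = 0 := by simp [hg]
  have hgd : ∀ t, HasDerivAt g (f' (a + t) - f' a - f'' * t) t := by
    intro t
    have h1 : HasDerivAt (fun t : ℝ => f (a + t)) (f' (a + t)) t := by
      simpa [Function.comp_def] using (HasDerivAt.scomp t (hf (a + t)) ((hasDerivAt_id t).const_add a))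
    have h2 := ((h1.sub_const (f a)).sub ((hasDerivAt_id t).const_mul (f' a))).sub
      (((hasDerivAt_pow 2 t).const_mul f'').div_const 2)
    exact h2.congr_deriv (by push_cast; ring)
  have hlo : (fun t => f' (a + t) - f' a - f'' * t) =o[nhds 0] fun t => t := by
    have h := hf'.isLittleO
    have hcomp : Tendsto (fun t : ℝ => a + t) (nhds 0) (nhds a) := by
      simpa using (tendsto_const_nhds.add (continuous_id.tendsto (0:ℝ)))
    have h2 := h.comp_tendsto hcomp
    simp only [Function.comp_def, add_sub_cancel_left, smul_eq_mul] at h2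
    have heq : (fun t : ℝ => f' (a + t) - f' a - f'' * t)
        = fun t : ℝ => f' (a + t) - f' a - t * f'' := by funext t; ring
    rw [heq]
    exact h2
  rw [Asymptotics.isLittleO_iff]
  intro c hc
  have hev : ∀ᶠ s in nhds (0:ℝ), ‖f' (a + s) - f' a - f'' * s‖ ≤ c * ‖s‖ :=
    Asymptotics.isLittleO_iff.mp hlo hc
  rw [Metric.eventually_nhds_iff] at hev
  obtain ⟨ε, hε, hball⟩ := hev
  rw [Metric.eventually_nhds_iff]
  refine ⟨ε, hε, fun t ht => ?_⟩
  simp only [Real.dist_eq, sub_zero] at ht ⊢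
  have habs : ∀ x ∈ Set.uIcc (0:ℝ) t, |x| ≤ |t| := by
    intro x hx
    have h1 := le_abs_self t
    have h2 := neg_abs_le t
    rcases Set.mem_uIcc.mp hx with ⟨ha1, ha2⟩ | ⟨ha1, ha2⟩ <;> rw [abs_le] <;>
      constructor <;> linarith
  have key : ‖g t - g 0‖ ≤ (c * |t|) * ‖t - 0‖ := by
    refine Convex.norm_image_sub_le_of_norm_hasDerivWithin_le
      (f' := fun x => f' (a + x) - f' a - f'' * x)
      (fun x _ => (hgd x).hasDerivWithinAt) (fun x hx => ?_) (convex_uIcc 0 t)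
      (Set.left_mem_uIcc) (Set.right_mem_uIcc)
    have hxt := habs x hx
    have hbx : ‖f' (a + x) - f' a - f'' * x‖ ≤ c * ‖x‖ := by
      refine hball ?_
      simp only [Real.dist_eq, sub_zero]
      exact lt_of_le_of_lt hxt ht
    refine hbx.trans ?_
    exact mul_le_mul_of_nonneg_left hxt hc.le
  rw [hg0, sub_zero] at key
  calc ‖g t‖ ≤ c * |t| * ‖t - 0‖ := key
    _ = c * ‖t ^ 2‖ := by
        rw [sub_zero, Real.norm_eq_abs, Real.norm_eq_abs, abs_pow]
        ring

noncomputable def auxU (z σ t : ℝ) : ℝ := (Real.exp (z * t) - 1) / t / σ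

noncomputable def auxA (z t : ℝ) : ℝ :=
  (Real.exp (z * t) - 1 - z * t - z ^ 2 * t ^ 2 / 2) / t ^ 2

lemma tendsto_auxA (z : ℝ) :
    Tendsto (auxA z) (nhdsWithin 0 (Set.Ioi 0)) (nhds 0) := by
  have hf : ∀ x : ℝ, HasDerivAt (fun s => Real.exp (z * s)) (Real.exp (z * x) * z) x :=
    fun x => (((hasDerivAt_id x).const_mul z).exp).congr_deriv (by simp)
  have hf' : HasDerivAt (fun x => Real.exp (z * x) * z) (Real.exp (z * 0) * z * z) 0 :=
    (hf 0).mul_const z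
  have h := second_order hf hf'
  have h2 : (fun t => Real.exp (z * t) - 1 - z * t - z ^ 2 * t ^ 2 / 2)
      =o[nhds 0] fun t : ℝ => t ^ 2 := by
    refine h.congr' (Eventually.of_forall fun t => ?_) (Eventually.of_forall fun t => rfl)
    simp only [zero_add, mul_zero, Real.exp_zero, one_mul]
    ring
  exact (h2.tendsto_div_nhds_zero).mono_left nhdsWithin_le_nhds

noncomputable def auxDp (z σ t : ℝ) : ℝ :=
  (stdNormalCDF (z / σ + σ / 2 * t) - stdNormalCDF (z / σ)
    - stdNormalPDF (z / σ) * (σ / 2) * t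
    + z / σ * stdNormalPDF (z / σ) * (σ / 2) ^ 2 * t ^ 2 / 2) / t ^ 2

noncomputable def auxDm (z σ t : ℝ) : ℝ :=
  (stdNormalCDF (z / σ - σ / 2 * t) - stdNormalCDF (z / σ)
    + stdNormalPDF (z / σ) * (σ / 2) * t
    + z / σ * stdNormalPDF (z / σ) * (σ / 2) ^ 2 * t ^ 2 / 2) / t ^ 2

/-- Second-order expansion of the CDF along a linear path `t ↦ z/σ + k t`. -/
lemma cdf_second_order (aa k : ℝ) :
    (fun t => stdNormalCDF (aa + k * t) - stdNormalCDF aa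
      - stdNormalPDF aa * (k * t) + aa * stdNormalPDF aa * (k * t) ^ 2 / 2)
      =o[nhds 0] fun t : ℝ => t ^ 2 := by
  have h := second_order (f := stdNormalCDF) (f' := stdNormalPDF)
    (a := aa) (f'' := -aa * stdNormalPDF aa) hasDerivAt_cdf (hasDerivAt_pdf aa)
  have hmap : Tendsto (fun t : ℝ => k * t) (nhds 0) (nhds 0) := by
    exact (continuous_const.mul continuous_id).tendsto' (0 : ℝ) 0 (by simp)
  have h2 := h.comp_tendsto hmap
  have h3 : (fun t => stdNormalCDF (aa + k * t) - stdNormalCDF aa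
      - stdNormalPDF aa * (k * t) + aa * stdNormalPDF aa * (k * t) ^ 2 / 2)
      =o[nhds 0] fun t : ℝ => (k * t) ^ 2 := by
    refine h2.congr' (Eventually.of_forall fun t => ?_) (Eventually.of_forall fun t => rfl)
    simp only [Function.comp_def]
    ring
  refine h3.trans_isBigO ?_
  refine Asymptotics.IsBigO.of_bound (k ^ 2) (Eventually.of_forall fun t => ?_)
  simp only [norm_pow, norm_mul, Real.norm_eq_abs]
  calc (|k| * |t|) ^ 2 = k ^ 2 * |t| ^ 2 := by rw [mul_pow, sq_abs]
    _ ≤ k ^ 2 * |t| ^ 2 := le_rfl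

lemma tendsto_auxDp (z σ : ℝ) :
    Tendsto (auxDp z σ) (nhdsWithin 0 (Set.Ioi 0)) (nhds 0) := by
  have h := cdf_second_order (z / σ) (σ / 2)
  have h2 : (fun t => stdNormalCDF (z / σ + σ / 2 * t) - stdNormalCDF (z / σ)
      - stdNormalPDF (z / σ) * (σ / 2) * t
      + z / σ * stdNormalPDF (z / σ) * (σ / 2) ^ 2 * t ^ 2 / 2)
      =o[nhds 0] fun t : ℝ => t ^ 2 := by
    refine h.congr' (Eventually.of_forall fun t => ?_) (Eventually.of_forall fun t => rfl)
    ring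
  exact (h2.tendsto_div_nhds_zero).mono_left nhdsWithin_le_nhds

lemma tendsto_auxDm (z σ : ℝ) :
    Tendsto (auxDm z σ) (nhdsWithin 0 (Set.Ioi 0)) (nhds 0) := by
  have h := cdf_second_order (z / σ) (-(σ / 2))
  have h2 : (fun t => stdNormalCDF (z / σ - σ / 2 * t) - stdNormalCDF (z / σ)
      + stdNormalPDF (z / σ) * (σ / 2) * t
      + z / σ * stdNormalPDF (z / σ) * (σ / 2) ^ 2 * t ^ 2 / 2)
      =o[nhds 0] fun t : ℝ => t ^ 2 := by
    refine h.congr' (Eventually.of_forall fun t => ?_) (Eventually.of_forall fun t => rfl)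
    have h4 : z / σ + -(σ / 2) * t = z / σ - σ / 2 * t := by ring
    dsimp only
    rw [h4]
    ring
  exact (h2.tendsto_div_nhds_zero).mono_left nhdsWithin_le_nhds

noncomputable def auxB (z σ t : ℝ) : ℝ :=
  (stdNormalCDF (auxU z σ t) - stdNormalCDF (z / σ)
    - stdNormalPDF (z / σ) * (z ^ 2 / (2 * σ)) * t) / t

noncomputable def auxG (z σ t : ℝ) : ℝ :=
  (stdNormalPDF (auxU z σ t) - stdNormalPDF (z / σ)
    + z / σ * stdNormalPDF (z / σ) * (z ^ 2 / (2 * σ)) * t) / t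

lemma tendsto_slope_auxU (z σ : ℝ) (hσ : 0 < σ) :
    Tendsto (fun t => (auxU z σ t - z / σ) / t) (nhdsWithin 0 (Set.Ioi 0))
      (nhds (z ^ 2 / (2 * σ))) := by
  have hA := tendsto_auxA z
  have key : Tendsto (fun t => (auxA z t + z ^ 2 / 2) / σ) (nhdsWithin 0 (Set.Ioi 0))
      (nhds (z ^ 2 / (2 * σ))) := by
    have := (hA.add_const (z ^ 2 / 2)).div_const σ
    simpa [zero_add, div_div] using this
  refine key.congr' ?_
  filter_upwards [self_mem_nhdsWithin] with t ht
  have ht0 : t ≠ 0 := ne_of_gt ht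
  unfold auxA auxU
  field_simp
  ring

lemma tendsto_auxU (z σ : ℝ) (hσ : 0 < σ) :
    Tendsto (auxU z σ) (nhdsWithin 0 (Set.Ioi 0)) (nhds (z / σ)) := by
  have h := (tendsto_slope_auxU z σ hσ).mul
    (tendsto_id.mono_left (nhdsWithin_le_nhds (a := (0:ℝ))))
  have h2 : Tendsto (fun t => (auxU z σ t - z / σ) / t * t + z / σ)
      (nhdsWithin 0 (Set.Ioi 0)) (nhds (z / σ)) := by
    simpa using h.add_const (z / σ)
  refine h2.congr' ?_
  filter_upwards [self_mem_nhdsWithin] with t ht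
  have ht0 : t ≠ 0 := ne_of_gt ht
  field_simp
  ring

lemma isBigO_auxU (z σ : ℝ) (hσ : 0 < σ) :
    (fun t => auxU z σ t - z / σ) =O[nhdsWithin 0 (Set.Ioi 0)] fun t : ℝ => t := by
  have h := tendsto_slope_auxU z σ hσ
  have hb : ∀ᶠ t in nhdsWithin 0 (Set.Ioi 0),
      |(auxU z σ t - z / σ) / t| ≤ |z ^ 2 / (2 * σ)| + 1 := by
    have := h.abs.eventually_le_const (lt_add_one _)
    exact this
  refine Asymptotics.IsBigO.of_bound (|z ^ 2 / (2 * σ)| + 1) ?_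
  filter_upwards [hb, self_mem_nhdsWithin] with t hbt ht
  have ht0 : (0:ℝ) < |t| := abs_pos.mpr (ne_of_gt ht)
  rw [Real.norm_eq_abs, Real.norm_eq_abs]
  rw [abs_div] at hbt
  calc |auxU z σ t - z / σ| = |auxU z σ t - z / σ| / |t| * |t| := by field_simp
    _ ≤ (|z ^ 2 / (2 * σ)| + 1) * |t| := by
        exact mul_le_mul_of_nonneg_right hbt (abs_nonneg t)

lemma littleO_comp_cdf (z σ : ℝ) (hσ : 0 < σ) :
    (fun t => stdNormalCDF (auxU z σ t) - stdNormalCDF (z / σ)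
      - (auxU z σ t - z / σ) * stdNormalPDF (z / σ))
      =o[nhdsWithin 0 (Set.Ioi 0)] fun t : ℝ => t := by
  have h := (hasDerivAt_iff_isLittleO.mp (hasDerivAt_cdf (z / σ)))
  have h2 := h.comp_tendsto (tendsto_auxU z σ hσ)
  simp only [Function.comp_def, smul_eq_mul] at h2
  exact (h2.congr' (Eventually.of_forall fun t => by ring)
    (Eventually.of_forall fun t => rfl)).trans_isBigO (isBigO_auxU z σ hσ)

lemma littleO_comp_pdf (z σ : ℝ) (hσ : 0 < σ) :
    (fun t => stdNormalPDF (auxU z σ t) - stdNormalPDF (z / σ)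
      - (auxU z σ t - z / σ) * (-(z / σ) * stdNormalPDF (z / σ)))
      =o[nhdsWithin 0 (Set.Ioi 0)] fun t : ℝ => t := by
  have h := (hasDerivAt_iff_isLittleO.mp (hasDerivAt_pdf (z / σ)))
  have h2 := h.comp_tendsto (tendsto_auxU z σ hσ)
  simp only [Function.comp_def, smul_eq_mul] at h2
  exact (h2.congr' (Eventually.of_forall fun t => by ring)
    (Eventually.of_forall fun t => rfl)).trans_isBigO (isBigO_auxU z σ hσ)

lemma tendsto_auxB (z σ : ℝ) (hσ : 0 < σ) :
    Tendsto (auxB z σ) (nhdsWithin 0 (Set.Ioi 0)) (nhds 0) := by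
  have h1 := (littleO_comp_cdf z σ hσ).tendsto_div_nhds_zero
  have h2 := ((tendsto_slope_auxU z σ hσ).sub_const (z ^ 2 / (2 * σ))).const_mul
    (stdNormalPDF (z / σ))
  have h3 := h1.add h2
  have h4 : Tendsto (fun t =>
      (stdNormalCDF (auxU z σ t) - stdNormalCDF (z / σ)
        - (auxU z σ t - z / σ) * stdNormalPDF (z / σ)) / t
      + stdNormalPDF (z / σ) * ((auxU z σ t - z / σ) / t - z ^ 2 / (2 * σ)))
      (nhdsWithin 0 (Set.Ioi 0)) (nhds 0) := by
    simpa using h3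
  refine h4.congr' ?_
  filter_upwards [self_mem_nhdsWithin] with t ht
  have ht0 : t ≠ 0 := ne_of_gt ht
  unfold auxB
  field_simp
  ring

lemma tendsto_auxG (z σ : ℝ) (hσ : 0 < σ) :
    Tendsto (auxG z σ) (nhdsWithin 0 (Set.Ioi 0)) (nhds 0) := by
  have h1 := (littleO_comp_pdf z σ hσ).tendsto_div_nhds_zero
  have h2 := ((tendsto_slope_auxU z σ hσ).sub_const (z ^ 2 / (2 * σ))).const_mul
    (-(z / σ) * stdNormalPDF (z / σ))
  have h3 := h1.add h2
  have h4 : Tendsto (fun t =>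
      (stdNormalPDF (auxU z σ t) - stdNormalPDF (z / σ)
        - (auxU z σ t - z / σ) * (-(z / σ) * stdNormalPDF (z / σ))) / t
      + (-(z / σ) * stdNormalPDF (z / σ)) * ((auxU z σ t - z / σ) / t - z ^ 2 / (2 * σ)))
      (nhdsWithin 0 (Set.Ioi 0)) (nhds 0) := by
    simpa using h3
  refine h4.congr' ?_
  filter_upwards [self_mem_nhdsWithin] with t ht
  have ht0 : t ≠ 0 := ne_of_gt ht
  unfold auxG
  field_simp
  ring

noncomputable def auxP (z σ t : ℝ) : ℝ :=
  Real.exp (z * t) * stdNormalCDF (z / σ + σ / 2 * t)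
    - stdNormalCDF (z / σ - σ / 2 * t)

noncomputable def auxQ (z σ t : ℝ) : ℝ :=
  (Real.exp (z * t) - 1) * stdNormalCDF (auxU z σ t)
    + σ * t * stdNormalPDF (auxU z σ t) * (1 + z / 2 * t)

noncomputable def auxQ0 (z σ t : ℝ) : ℝ :=
  (z * stdNormalCDF (z / σ) + σ * stdNormalPDF (z / σ)) * t
    + (z ^ 2 * stdNormalCDF (z / σ) + z * σ * stdNormalPDF (z / σ)) * t ^ 2 / 2

lemma tendsto_P (z σ : ℝ) (hσ : 0 < σ) :
    Tendsto (fun t => (auxP z σ t - auxQ0 z σ t) / t ^ 2)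
      (nhdsWithin 0 (Set.Ioi 0)) (nhds 0) := by
  set Φa := stdNormalCDF (z / σ) with hΦa
  set φa := stdNormalPDF (z / σ) with hφa
  set K1 := z / σ * φa * (σ / 2) ^ 2 / 2 with hK1
  have hDp := tendsto_auxDp z σ
  have hDm := tendsto_auxDm z σ
  have hA := tendsto_auxA z
  have hid : Tendsto (fun t : ℝ => t) (nhdsWithin 0 (Set.Ioi 0)) (nhds 0) :=
    tendsto_id.mono_right nhdsWithin_le_nhds
  have hbig := ((hDp.sub hDm).add (hA.mul_const Φa)).add
    ((hid.mul ((((hDp.sub_const K1).const_mul z).add (tendsto_const_nhds (x := z ^ 2 / 2 * φa * (σ / 2)))).add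
      (hA.mul_const (φa * (σ / 2))))).add
      ((hid.pow 2).mul ((hA.const_add (z ^ 2 / 2)).mul (hDp.sub_const K1))))
  have hbig2 : Tendsto (fun t =>
      (auxDp z σ t - auxDm z σ t) + auxA z t * Φa
      + ((t * ((z * (auxDp z σ t - K1) + z ^ 2 / 2 * φa * (σ / 2))
          + auxA z t * (φa * (σ / 2))))
        + t ^ 2 * ((z ^ 2 / 2 + auxA z t) * (auxDp z σ t - K1))))
      (nhdsWithin 0 (Set.Ioi 0)) (nhds 0) := by
    simpa using hbig
  refine hbig2.congr' ?_
  filter_upwards [self_mem_nhdsWithin] with t ht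
  have ht0 : t ≠ 0 := ne_of_gt ht
  unfold auxP auxQ0 auxDp auxDm auxA
  rw [← hΦa, ← hφa, hK1]
  field_simp
  ring

lemma tendsto_Q (z σ : ℝ) (hσ : 0 < σ) :
    Tendsto (fun t => (auxQ z σ t - auxQ0 z σ t) / t ^ 2)
      (nhdsWithin 0 (Set.Ioi 0)) (nhds 0) := by
  set Φa := stdNormalCDF (z / σ) with hΦa
  set φa := stdNormalPDF (z / σ) with hφa
  have hB := tendsto_auxB z σ hσ
  have hG := tendsto_auxG z σ hσ
  have hA := tendsto_auxA z
  have hid : Tendsto (fun t : ℝ => t) (nhdsWithin 0 (Set.Ioi 0)) (nhds 0) :=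
    tendsto_id.mono_right nhdsWithin_le_nhds
  have hbig := (((hB.const_mul z).add (hA.mul_const Φa)).add (hG.const_mul σ)).add
    (hid.mul (((hA.const_add (z ^ 2 / 2)).mul
      (hB.const_add (φa * (z ^ 2 / (2 * σ))))).add
      ((hG.sub_const (z / σ * φa * (z ^ 2 / (2 * σ)))).const_mul (σ * z / 2))))
  have hbig2 : Tendsto (fun t =>
      (z * auxB z σ t + auxA z t * Φa + σ * auxG z σ t)
      + t * ((z ^ 2 / 2 + auxA z t) * (φa * (z ^ 2 / (2 * σ)) + auxB z σ t)
        + σ * z / 2 * (auxG z σ t - z / σ * φa * (z ^ 2 / (2 * σ)))))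
      (nhdsWithin 0 (Set.Ioi 0)) (nhds 0) := by
    simpa using hbig
  refine hbig2.congr' ?_
  filter_upwards [self_mem_nhdsWithin] with t ht
  have ht0 : t ≠ 0 := ne_of_gt ht
  unfold auxQ auxQ0 auxB auxG auxA auxU
  rw [← hΦa, ← hφa]
  field_simp
  ring

lemma littleO_D (z σ : ℝ) (hσ : 0 < σ) :
    (fun t => (auxP z σ t - auxQ z σ t) / t) =o[nhdsWithin 0 (Set.Ioi 0)]
      fun t : ℝ => t := by
  have hD : Tendsto (fun t => (auxP z σ t - auxQ z σ t) / t ^ 2)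
      (nhdsWithin 0 (Set.Ioi 0)) (nhds 0) := by
    have h := (tendsto_P z σ hσ).sub (tendsto_Q z σ hσ)
    simp only [sub_zero] at h
    refine (h.congr fun t => ?_)
    ring
  have hDlo : (fun t => auxP z σ t - auxQ z σ t) =o[nhdsWithin 0 (Set.Ioi 0)]
      fun t : ℝ => t ^ 2 := by
    rw [Asymptotics.isLittleO_iff_tendsto']
    · exact hD
    · filter_upwards [self_mem_nhdsWithin] with t ht h
      exact absurd h (pow_ne_zero 2 (ne_of_gt ht))
  rw [Asymptotics.isLittleO_iff]
  intro c hc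
  filter_upwards [Asymptotics.isLittleO_iff.mp hDlo hc, self_mem_nhdsWithin] with t h1 ht
  have ht0 : (0:ℝ) < |t| := abs_pos.mpr (ne_of_gt ht)
  rw [Real.norm_eq_abs, abs_div, div_le_iff₀ ht0]
  calc |auxP z σ t - auxQ z σ t| ≤ c * ‖t ^ 2‖ := h1
    _ = c * |t| * |t| := by rw [Real.norm_eq_abs, abs_pow]; ring
    _ = c * ‖t‖ * |t| := by rw [Real.norm_eq_abs]

/-- Short-maturity expansion of the Black-Scholes put price: with
`Δ(θ) = (e^{z√θ} − 1)/√θ`, as `θ → 0⁺`,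
`p_BS(S₀, S₀e^{z√θ}, θ, σ)/(S₀√θ) − [Δ(θ)Φ(Δ(θ)/σ) + σφ(Δ(θ)/σ)(1 + (z/2)√θ)]
  = o(√θ)`. -/
theorem blackScholes_put_short_maturity_expansion
    (S₀ σ : ℝ) (hS₀ : 0 < S₀) (hσ : 0 < σ) (z : ℝ) :
    (fun θ : ℝ =>
        pBS S₀ (S₀ * Real.exp (z * Real.sqrt θ)) θ σ / (S₀ * Real.sqrt θ)
          - ((Real.exp (z * Real.sqrt θ) - 1) / Real.sqrt θ
                * stdNormalCDF ((Real.exp (z * Real.sqrt θ) - 1) / Real.sqrt θ / σ)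
              + σ * stdNormalPDF ((Real.exp (z * Real.sqrt θ) - 1) / Real.sqrt θ / σ)
                * (1 + z / 2 * Real.sqrt θ)))
      =o[nhdsWithin 0 (Set.Ioi 0)] fun θ : ℝ => Real.sqrt θ := by
  have hsq : Tendsto Real.sqrt (nhdsWithin 0 (Set.Ioi 0)) (nhdsWithin 0 (Set.Ioi 0)) := by
    rw [tendsto_nhdsWithin_iff]
    constructor
    · have h1 := (Real.continuous_sqrt.tendsto 0).mono_left
        (nhdsWithin_le_nhds (s := Set.Ioi (0:ℝ)))
      simpa using h1
    · filter_upwards [self_mem_nhdsWithin] with θ hθ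
      exact Real.sqrt_pos.mpr hθ
  have hcomp := (littleO_D z σ hσ).comp_tendsto hsq
  simp only [Function.comp_def] at hcomp
  refine Filter.EventuallyEq.trans_isLittleO ?_ hcomp
  filter_upwards [self_mem_nhdsWithin] with θ hθ
  have ht : (0:ℝ) < Real.sqrt θ := Real.sqrt_pos.mpr hθ
  set t := Real.sqrt θ with htdef
  have ht0 : t ≠ 0 := ne_of_gt ht
  have hlog : Real.log (S₀ / (S₀ * Real.exp (z * t))) = -(z * t) := by
    have h1 : S₀ / (S₀ * Real.exp (z * t)) = (Real.exp (z * t))⁻¹ := by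
      field_simp
    rw [h1, Real.log_inv, Real.log_exp]
  unfold pBS d2 d1 auxP auxQ auxU
  rw [hlog]
  have e1 : -(-(z * t) / (σ * t) + σ * t / 2 - σ * t) = z / σ + σ / 2 * t := by
    field_simp
    ring
  have e2 : -(-(z * t) / (σ * t) + σ * t / 2) = z / σ - σ / 2 * t := by
    field_simp
    ring
  rw [e1, e2]
  field_simp
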